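/- For integers 1 ≤ K < d, define Θ(u) = (1/K) Σ_{j=0}^{K-1} (K-j) C(d,j) u^{d-j-1} (1-u)^j. Then for 1 ≤ n ≤ K, the n-th derivative of Θ at u = 1 equals (-1)^{n+1} n! (d-K)/K. -/

import Mathlib

open Real Finset

section helpers
open Polynomial

private lemma sumB8 (m t : ℕ) (ht1 : 1 ≤ t) (htm : t ≤ m) :
    ∑ j ∈ range (t+1), (-1:ℝ)^j * (m.choose j) * ((m-j).choose (t-j)) = 0 := by
  have h : ∀ j ∈ range (t+1), (-1:ℝ)^j * (m.choose j) * ((m-j).choose (t-j))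
      = (m.choose t : ℝ) * ((-1)^j * (t.choose j)) := by
    intro j hj
    have hjt : j ≤ t := Nat.lt_succ_iff.mp (mem_range.mp hj)
    have hc : ((m.choose t * t.choose j : ℕ) : ℝ) = ((m.choose j * (m-j).choose (t-j) : ℕ) : ℝ) := by
      rw [Nat.choose_mul (n := m) hjt]
    push_cast at hc
    linear_combination (-(-1:ℝ)^j) * hc
  rw [Finset.sum_congr rfl h, ← Finset.mul_sum]
  have : (∑ j ∈ range (t+1), ((-1:ℝ)^j * (t.choose j))) = 0 := by
    have h2 : ((∑ m ∈ range (t + 1), ((-1) ^ m * t.choose m : ℤ) : ℤ) : ℝ) = 0 := by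
      rw [Int.alternating_sum_range_choose_of_ne (Nat.one_le_iff_ne_zero.mp ht1)]; simp
    push_cast at h2
    exact h2
  rw [this, mul_zero]

private lemma sumA8 : ∀ (n d : ℕ), n < d →
    ∑ j ∈ range (n+1), (-1:ℝ)^j * (d.choose j) * ((d-1-j).choose (n-j)) = (-1)^n := by
  intro n
  induction n with
  | zero => intro d hd; simp
  | succ n ih =>
    intro d hd
    obtain ⟨e, rfl⟩ : ∃ e, d = e + 1 := ⟨d - 1, by omega⟩
    have he : n + 1 ≤ e := by omega
    have key : ∀ j ∈ range (n+2),
        (-1:ℝ)^j * ((e+1).choose j) * ((e+1-1-j).choose (n+1-j))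
        = ((-1:ℝ)^j * (e.choose j) * ((e-j).choose (n+1-j)))
          + (if h : j = 0 then 0 else
              -((-1:ℝ)^(j-1) * (e.choose (j-1)) * ((e-1-(j-1)).choose (n-(j-1))))) := by
      intro j hj
      match j with
      | 0 => simp
      | i+1 =>
        simp only [Nat.add_sub_cancel, Nat.succ_ne_zero, dif_neg, not_false_iff]
        have h1 : (e+1).choose (i+1) = e.choose i + e.choose (i+1) := Nat.choose_succ_succ e i
        have h3 : e - (i+1) = e - 1 - i := by omega
        have h4 : n + 1 - (i+1) = n - i := by omega
        rw [h1, h3, h4]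
        push_cast
        ring
    rw [Finset.sum_congr rfl key, Finset.sum_add_distrib]
    have hB : ∑ j ∈ range (n+2), ((-1:ℝ)^j * (e.choose j) * ((e-j).choose (n+1-j))) = 0 :=
      sumB8 e (n+1) (by omega) he
    have hA : ∑ j ∈ range (n+2), (if h : j = 0 then (0:ℝ) else
        -((-1:ℝ)^(j-1) * (e.choose (j-1)) * ((e-1-(j-1)).choose (n-(j-1))))) = -(-1)^n := by
      rw [Finset.sum_range_succ']
      simp only [Nat.add_sub_cancel, Nat.succ_ne_zero, dif_neg, not_false_iff, dif_pos, add_zero]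
      rw [Finset.sum_neg_distrib, ih e (by omega)]
    rw [hB, hA]
    ring

private lemma sumS8 (K d n : ℕ) (hKd : K < d) (hn1 : 1 ≤ n) (hnK : n ≤ K) :
    ∑ j ∈ range (n+1), ((K:ℝ) - j) * (d.choose j) * ((-1)^j * ((d-1-j).choose (n-j)))
      = (-1)^(n+1) * ((d:ℝ) - K) := by
  have step : ∀ j ∈ range (n+1),
      ((K:ℝ) - j) * (d.choose j) * ((-1)^j * ((d-1-j).choose (n-j)))
      = ((K:ℝ) - d) * ((-1:ℝ)^j * (d.choose j) * ((d-1-j).choose (n-j)))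
        + (d:ℝ) * ((-1:ℝ)^j * ((d-1).choose j) * ((d-1-j).choose (n-j))) := by
    intro j hj
    have hjd : j ≤ d := by have := mem_range.mp hj; omega
    have hnat : (d-1).choose j * d = d.choose j * (d - j) := by
      have h := Nat.choose_mul_succ_eq (d-1) j
      have hd1 : d - 1 + 1 = d := by omega
      rwa [hd1] at h
    have hc : ((d-1).choose j : ℝ) * d = (d.choose j : ℝ) * ((d:ℝ) - j) := by
      have : (((d-1).choose j * d : ℕ) : ℝ) = ((d.choose j * (d - j) : ℕ) : ℝ) := by rw [hnat]
      push_cast [Nat.cast_sub hjd] at this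
      linarith [this]
    linear_combination (-(-1:ℝ)^j * (((d-1-j).choose (n-j) : ℕ) : ℝ)) * hc
  rw [Finset.sum_congr rfl step, Finset.sum_add_distrib, ← Finset.mul_sum, ← Finset.mul_sum]
  rw [sumA8 n d (by omega), sumB8 (d-1) n hn1 (by omega)]
  ring

private lemma iterDerivPoly8 (p : ℝ[X]) (n : ℕ) :
    iteratedDeriv n (fun x => p.eval x) = fun x => (derivative^[n] p).eval x := by
  induction n with
  | zero => simp
  | succ n ih =>
    rw [iteratedDeriv_succ, ih]
    funext x
    rw [Function.iterate_succ_apply']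
    exact Polynomial.deriv (p := derivative^[n] p)

end helpers

theorem stmt_8 (K d : ℕ) (hK : 1 ≤ K) (hKd : K < d)
    (Θ : ℝ → ℝ)
    (hΘ : Θ = fun u : ℝ => (1 / K) * ∑ j ∈ Finset.range K,
        ((K:ℝ) - j) * (d.choose j) * u ^ (d - j - 1) * (1 - u) ^ j) :
    ∀ n : ℕ, 1 ≤ n → n ≤ K →
      iteratedDeriv n Θ 1 = (-1) ^ (n + 1) * (n.factorial : ℝ) * ((d:ℝ) - K) / K := by
  intro n hn1 hnK
  classical
  open Polynomial in
  set P : ℝ[X] := C ((1:ℝ)/K) * ∑ j ∈ range K,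
      (C ((K:ℝ) - j) * C ((d.choose j : ℝ)) * X^(d-j-1) * (1 - X)^j) with hP
  have hΘP : Θ = fun u => P.eval u := by
    funext u
    rw [hΘ, hP]
    simp [eval_finset_sum]
  rw [hΘP, iterDerivPoly8]
  show Polynomial.eval 1 ((⇑Polynomial.derivative)^[n] P) = _
  -- derivative^[n] P at 1 equals n! * coeff n of taylor 1 P
  have hfac : (derivative^[n] P).eval 1 = (n.factorial : ℝ) * (taylor (1:ℝ) P).coeff n := by
    have h1 := congrFun (Polynomial.factorial_smul_hasseDeriv (R := ℝ) (k := n)) P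
    rw [← h1]
    simp [Polynomial.taylor_coeff, mul_comm]
  rw [hfac]
  -- compute taylor 1 P
  have htay : taylor (1:ℝ) P = C ((1:ℝ)/K) * ∑ j ∈ range K,
      (C (((K:ℝ) - j) * (d.choose j) * (-1)^j) * ((X+1)^(d-j-1) * X^j)) := by
    rw [hP, taylor_apply]
    simp only [mul_comp, Polynomial.sum_comp, pow_comp, sub_comp, one_comp, X_comp, C_comp, C_1]
    congr 1
    apply Finset.sum_congr rfl
    intro j hj
    have : (1 : ℝ[X]) - (X + 1) = -X := by ring
    rw [this]
    simp only [C_mul, C_pow, C_neg, C_1]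
    ring
  rw [htay]
  -- coefficient computation
  have hcoeff : (C ((1:ℝ)/K) * ∑ j ∈ range K,
      (C (((K:ℝ) - j) * (d.choose j) * (-1)^j) * ((X+1)^(d-j-1) * X^j))).coeff n
      = (1/K) * ∑ j ∈ range K, (((K:ℝ) - j) * (d.choose j) * (-1)^j *
          (if j ≤ n then (((d-j-1).choose (n-j) : ℝ)) else 0)) := by
    rw [coeff_C_mul, finset_sum_coeff]
    congr 1
    apply Finset.sum_congr rfl
    intro j hj
    rw [coeff_C_mul, coeff_mul_X_pow', coeff_X_add_one_pow]
  rw [hcoeff]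
  -- reduce range K sum to range (n+1) sum
  have hsub : ∑ j ∈ range K, (((K:ℝ) - j) * (d.choose j) * (-1)^j *
        (if j ≤ n then (((d-j-1).choose (n-j) : ℝ)) else 0))
      = ∑ j ∈ range (n+1), ((K:ℝ) - j) * (d.choose j) * ((-1)^j * ((d-1-j).choose (n-j))) := by
    have hKn : ∑ j ∈ range (K+1), (((K:ℝ) - j) * (d.choose j) * (-1)^j *
        (if j ≤ n then (((d-j-1).choose (n-j) : ℝ)) else 0))
        = ∑ j ∈ range K, (((K:ℝ) - j) * (d.choose j) * (-1)^j *
        (if j ≤ n then (((d-j-1).choose (n-j) : ℝ)) else 0)) := by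
      rw [Finset.sum_range_succ]
      simp
    rw [← hKn]
    rw [← Finset.sum_subset (Finset.range_subset_range.mpr (by omega : n + 1 ≤ K + 1))]
    · apply Finset.sum_congr rfl
      intro j hj
      have hjn : j ≤ n := Nat.lt_succ_iff.mp (mem_range.mp hj)
      rw [if_pos hjn]
      have : d - j - 1 = d - 1 - j := by omega
      rw [this]
      ring
    · intro j hj hj2
      have : ¬ (j ≤ n) := by
        simp only [mem_range] at hj hj2
        omega
      rw [if_neg this, mul_zero]
  rw [hsub, sumS8 K d n hKd hn1 hnK]
  have hK0 : (K:ℝ) ≠ 0 := Nat.cast_ne_zero.mpr (by omega)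
  field_simp
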